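/- If G(y) = (1-μy)^{2/3} with 0 < μ < μ* and y_c is the first positive root of G - yG' - y = 0, then 1 - μ y_c > 0; i.e., the Cauchy horizon lies strictly before the shell-focusing singularity y = 1/μ. -/

import Mathlib

noncomputable def Faux (μ : ℝ) : ℝ → ℝ := fun y =>
  (1 - μ * y) ^ ((2 : ℝ) / 3) - y * deriv (fun y => (1 - μ * y) ^ ((2 : ℝ) / 3)) y - y

set_option maxHeartbeats 1000000 in
/-- If `G(y) = (1-μy)^{2/3}` with `0 < μ < μ*` and `y_c` is the first positive
root of `G - yG' - y = 0`, then `1 - μ y_c > 0`: the Cauchy horizon lies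
strictly before the shell-focusing singularity `y = 1/μ`. -/
theorem stmt_18 (μ : ℝ) (hμ0 : 0 < μ)
    (hμs : μ < (3 / 2) * (104 - 60 * Real.sqrt 3) ^ ((1 : ℝ) / 3))
    (G : ℝ → ℝ) (hG : ∀ y, G y = (1 - μ * y) ^ ((2 : ℝ) / 3))
    (yc : ℝ) (hpos : 0 < yc)
    (hroot : G yc - yc * deriv G yc - yc = 0)
    (hfirst : ∀ z : ℝ, 0 < z → z < yc → G z - z * deriv G z - z ≠ 0) :
    1 - μ * yc > 0 := by
  have hGe : G = fun y => (1 - μ * y) ^ ((2 : ℝ) / 3) := funext hG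
  subst hGe
  set s := Real.sqrt 3 with hs
  have hs2 : s ^ 2 = 3 := Real.sq_sqrt (by norm_num)
  have hs_gt : 1.7 < s := by nlinarith [Real.sqrt_nonneg 3]
  have hs_lt : s < 1.8 := by nlinarith [Real.sqrt_nonneg 3]
  set c : ℝ := 3 * s - 5 with hcdef
  set a : ℝ := 6 - 3 * s with hadef
  have hc : 0 < c := by simp only [hcdef]; linarith
  have ha : 0 < a := by simp only [hadef]; linarith
  have ha1 : a < 1 := by simp only [hadef]; linarith
  set t : ℝ := c ^ ((1 : ℝ) / 3) with htdef
  have ht : 0 < t := Real.rpow_pos_of_pos hc _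
  have ht3 : t ^ 3 = c := by
    rw [htdef, ← Real.rpow_natCast (c ^ ((1:ℝ)/3)) 3, ← Real.rpow_mul hc.le]
    norm_num
  have ht2 : c ^ ((2 : ℝ) / 3) = t ^ 2 := by
    rw [htdef, ← Real.rpow_natCast (c ^ ((1:ℝ)/3)) 2, ← Real.rpow_mul hc.le]
    norm_num
  have htinv : c ^ ((2 : ℝ) / 3 - 1) = 1 / t := by
    rw [show (2:ℝ)/3 - 1 = -(1/3) by norm_num, Real.rpow_neg hc.le]
    exact (one_div _).symm
  -- key bound: μ (s-1) < a t
  have hK : 104 - 60 * s = (s - 1) ^ 3 * c := by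
    simp only [hcdef]
    linear_combination (-3 * s ^ 2 + 14 * s - 33) * hs2
  have hs1 : (0:ℝ) ≤ s - 1 := by linarith
  have hKt : (104 - 60 * s) ^ ((1 : ℝ) / 3) = (s - 1) * t := by
    rw [hK, Real.mul_rpow (by positivity) hc.le, htdef]
    congr 1
    rw [← Real.rpow_natCast (s - 1) 3, ← Real.rpow_mul hs1]
    norm_num
  have hμs' : μ < 3 / 2 * ((s - 1) * t) := by rw [← hKt]; exact hμs
  have haeq : a = 3 / 2 * (s - 1) ^ 2 := by
    simp only [hadef]; linear_combination (-3/2 : ℝ) * hs2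
  have hkey : μ * (s - 1) < a * t := by
    rw [haeq]
    nlinarith [mul_lt_mul_of_pos_right hμs' (show (0:ℝ) < s - 1 by linarith)]
  -- derivative of G on the good region
  have hderiv : ∀ y : ℝ, 1 - μ * y ≠ 0 →
      deriv (fun y => (1 - μ * y) ^ ((2 : ℝ) / 3)) y
        = -μ * ((2:ℝ)/3) * (1 - μ * y) ^ ((2 : ℝ) / 3 - 1) := by
    intro y hy
    have h1 : HasDerivAt (fun y : ℝ => 1 - μ * y) (-μ) y := by
      simpa using ((hasDerivAt_id y).const_mul μ).const_sub 1
    exact (h1.rpow_const (Or.inl hy)).deriv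
  set y₀ : ℝ := a / μ with hy₀def
  have hy₀pos : 0 < y₀ := div_pos ha hμ0
  have hμy₀ : μ * y₀ = a := by rw [hy₀def]; field_simp
  have hcy : 1 - μ * y₀ = c := by rw [hμy₀]; simp only [hadef, hcdef]; ring
  have hposIcc : ∀ z ∈ Set.Icc (0:ℝ) y₀, 0 < 1 - μ * z := by
    intro z hz
    have : μ * z ≤ μ * y₀ := mul_le_mul_of_nonneg_left hz.2 hμ0.le
    rw [hμy₀] at this; linarith
  -- continuity of F on [0, y₀]
  have hcont : ContinuousOn (Faux μ) (Set.Icc 0 y₀) := by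
    have hcont' : ContinuousOn (fun y =>
        (1 - μ * y) ^ ((2 : ℝ) / 3) - y * (-μ * ((2:ℝ)/3) * (1 - μ * y) ^ ((2 : ℝ) / 3 - 1)) - y)
        (Set.Icc 0 y₀) := by
      intro y hy
      have hne : 1 - μ * y ≠ 0 := (hposIcc y hy).ne'
      have c1 : ContinuousAt (fun y : ℝ => 1 - μ * y) y := by fun_prop
      have c2 := c1.rpow_const (p := (2:ℝ)/3) (Or.inr (by norm_num))
      have c3 := c1.rpow_const (p := (2:ℝ)/3 - 1) (Or.inl hne)
      exact ((c2.sub (continuousAt_id.mul (continuousAt_const.mul c3))).sub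
        continuousAt_id).continuousWithinAt
    refine hcont'.congr fun y hy => ?_
    simp only [Faux]
    rw [hderiv y (hposIcc y hy).ne']
  have hF0 : Faux μ 0 = 1 := by
    simp [Faux, Real.one_rpow]
  have hFy₀ : Faux μ y₀ < 0 := by
    have hFval : Faux μ y₀ = t ^ 2 + y₀ * (μ * ((2:ℝ)/3) * (1 / t)) - y₀ := by
      simp only [Faux]
      rw [hderiv y₀ (by rw [hcy]; exact hc.ne'), hcy, ht2, htinv]; ring
    have hmul : Faux μ y₀ * t = c + 2/3 * a - a / μ * t := by
      calc Faux μ y₀ * t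
          = t ^ 3 + (μ * y₀) * (2/3) * ((1/t) * t) - y₀ * t := by rw [hFval]; ring
        _ = c + 2/3 * a - a / μ * t := by
            rw [ht3, hμy₀, one_div_mul_cancel ht.ne', hy₀def]; ring
    have hlin : c + 2/3 * a = s - 1 := by simp only [hcdef, hadef]; ring
    have hdiv : s - 1 < a / μ * t := by
      rw [div_mul_eq_mul_div, lt_div_iff₀ hμ0]
      nlinarith [hkey]
    have hneg : Faux μ y₀ * t < 0 := by rw [hmul]; linarith
    by_contra hcon
    push_neg at hcon
    exact absurd (mul_nonneg hcon ht.le) (not_le.mpr hneg)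
  have hsub := intermediate_value_Icc' hy₀pos.le hcont
  obtain ⟨z, hzmem, hFz⟩ := hsub ⟨hFy₀.le, by rw [hF0]; norm_num⟩
  have hz0 : 0 < z := by
    rcases lt_or_eq_of_le hzmem.1 with h | h
    · exact h
    · exfalso; rw [← h, hF0] at hFz; norm_num at hFz
  have hyc : yc ≤ z := by
    by_contra h
    push_neg at h
    have hFz' : (1 - μ * z) ^ ((2 : ℝ) / 3)
        - z * deriv (fun y => (1 - μ * y) ^ ((2 : ℝ) / 3)) z - z = 0 := hFz
    exact hfirst z hz0 h hFz'
  have hle : μ * yc ≤ μ * y₀ := mul_le_mul_of_nonneg_left (hyc.trans hzmem.2) hμ0.le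
  rw [hμy₀] at hle
  linarith
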